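/- In an SRI instance with degree at most 3, if uv is an edge that is a (3,3)-pair (each endpoint ranks the other last among exactly 3 neighbours) and uv belongs to some stable matching, then uv belongs to every stable matching. -/

import Mathlib

/-- An instance of the Stable Roommates problem with Incomplete (strict) lists:
a graph together with a rank function, where `rank u v` is one plus the number
of neighbours of `u` that `u` strictly prefers to `v`, and ranks of distinct
neighbours are distinct (strict preferences). -/
structure SRI (V : Type*) [Fintype V] where
  G : SimpleGraph V
  rank : V → V → ℕ
  rank_eq : ∀ u v, G.Adj u v →
    rank u v = 1 + Set.ncard {w | G.Adj u w ∧ rank u w < rank u v}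
  rank_inj : ∀ u v w, G.Adj u v → G.Adj u w → rank u v = rank u w → v = w

variable {V : Type*} [Fintype V]

/-- A matching: a symmetric partial pairing along edges of the graph. -/
structure SRI.Matching (I : SRI V) where
  M : V → Option V
  symm : ∀ u v, M u = some v → M v = some u
  adj : ∀ u v, M u = some v → I.G.Adj u v

/-- Edge `uv` blocks `N`. -/
def SRI.Blocks (I : SRI V) (N : I.Matching) (u v : V) : Prop :=
  I.G.Adj u v ∧ N.M u ≠ some v ∧
  (N.M u = none ∨ ∃ w, N.M u = some w ∧ I.rank u v < I.rank u w) ∧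
  (N.M v = none ∨ ∃ w, N.M v = some w ∧ I.rank v u < I.rank v w)

def SRI.Stable (I : SRI V) (N : I.Matching) : Prop := ∀ u v, ¬ I.Blocks N u v

/-- Cost of a matching: the sum of `rank a (M a)` over matched agents `a`. -/
def SRI.cost (I : SRI V) (N : I.Matching) : ℕ :=
  ∑ v : V, (N.M v).elim 0 (I.rank v)

/-- Every preference list has length at most `d`. -/
def SRI.MaxDeg (I : SRI V) (d : ℕ) : Prop := ∀ v, Set.ncard {w | I.G.Adj v w} ≤ d

/-- An egalitarian stable matching minimises cost among stable matchings. -/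
def SRI.Egalitarian (I : SRI V) (N : I.Matching) : Prop :=
  I.Stable N ∧ ∀ N' : I.Matching, I.Stable N' → I.cost N ≤ I.cost N'


lemma SRI.rank_le_ncard (I : SRI V) (x y : V) (h : I.G.Adj x y) :
    I.rank x y ≤ Set.ncard {w | I.G.Adj x w} := by
  rw [I.rank_eq x y h]
  have hfin : {w | I.G.Adj x w}.Finite := Set.toFinite _
  have hss : {w | I.G.Adj x w ∧ I.rank x w < I.rank x y} ⊂ {w | I.G.Adj x w} := by
    constructor
    · intro w hw; exact hw.1
    · intro hsub
      exact absurd (hsub (show y ∈ {w | I.G.Adj x w} from h)).2 (lt_irrefl _)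
  have := Set.ncard_lt_ncard hss hfin
  omega

/-- In a 3-SRI instance, a (3,3)-pair contained in some stable matching
belongs to every stable matching. -/
theorem stmt3 (I : SRI V) (h3 : I.MaxDeg 3) (u v : V) (hadj : I.G.Adj u v)
    (hu : I.rank u v = 3) (hv : I.rank v u = 3)
    (N0 : I.Matching) (hN0 : I.Stable N0) (hm0 : N0.M u = some v)
    (N : I.Matching) (hN : I.Stable N) : N.M u = some v := by
  by_contra hne
  classical
  have hbound : ∀ x y, I.G.Adj x y → I.rank x y ≤ 3 := fun x y h =>
    le_trans (I.rank_le_ncard x y h) (h3 x)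
  set S : Set V := {x | ∃ a b, N.M x = some a ∧ N0.M x = some b ∧ I.rank x a < I.rank x b}
    with hSdef
  set g : V → V := fun x => ((N.M x).bind N0.M).getD x with hgdef
  have step : ∀ x ∈ S, g x ∈ S ∧ ∃ a, N.M x = some a ∧ N0.M (g x) = some a ∧
      I.rank a (g x) < I.rank a x ∧ N.M a = some x := by
    rintro x ⟨a, b, hxa, hxb, hr⟩
    have hadjxa : I.G.Adj x a := N.adj x a hxa
    have hNax : N.M a = some x := N.symm x a hxa
    -- edge (x, a) does not block N0
    have hnb0 := hN0 x a
    have hxne : N0.M x ≠ some a := by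
      intro hEq
      rw [hEq] at hxb
      rw [Option.some.inj hxb] at hr
      exact absurd hr (lt_irrefl _)
    have hD : ¬ (N0.M a = none ∨ ∃ w, N0.M a = some w ∧ I.rank a x < I.rank a w) := by
      intro hD
      exact hnb0 ⟨hadjxa, hxne, Or.inr ⟨b, hxb, hr⟩, hD⟩
    push_neg at hD
    obtain ⟨hDn, hDw⟩ := hD
    obtain ⟨c, hac⟩ : ∃ c, N0.M a = some c := Option.ne_none_iff_exists'.mp hDn
    have hadjac : I.G.Adj a c := N0.adj a c hac
    have hcx : c ≠ x := by
      intro hEq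
      subst hEq
      exact hxne (N0.symm a c hac)
    have hrac : I.rank a c < I.rank a x := by
      have hle := hDw c hac
      have hneq : I.rank a c ≠ I.rank a x :=
        fun hEq => hcx (I.rank_inj a c x hadjac hadjxa.symm hEq)
      omega
    -- edge (a, c) does not block N
    have hnb1 := hN a c
    have hNane : N.M a ≠ some c := by
      rw [hNax]; intro hEq; exact hcx (Option.some.inj hEq).symm
    have hD2 : ¬ (N.M c = none ∨ ∃ w, N.M c = some w ∧ I.rank c a < I.rank c w) := by
      intro hD2
      exact hnb1 ⟨hadjac, hNane, Or.inr ⟨x, hNax, hrac⟩, hD2⟩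
    push_neg at hD2
    obtain ⟨hD2n, hD2w⟩ := hD2
    obtain ⟨d, hcd⟩ : ∃ d, N.M c = some d := Option.ne_none_iff_exists'.mp hD2n
    have hda : d ≠ a := by
      intro hEq
      subst hEq
      have := N.symm c d hcd
      rw [hNax] at this
      exact hcx (Option.some.inj this).symm
    have hrcd : I.rank c d < I.rank c a := by
      have hle := hD2w d hcd
      have hneq : I.rank c d ≠ I.rank c a :=
        fun hEq => hda (I.rank_inj c d a (N.adj c d hcd) hadjac.symm hEq)
      omega
    have hgx : g x = c := by
      show ((N.M x).bind N0.M).getD x = c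
      rw [hxa, Option.bind_some, hac, Option.getD_some]
    refine ⟨?_, a, hxa, ?_, ?_, hNax⟩
    · rw [hgx]; exact ⟨d, a, hcd, N0.symm a c hac, hrcd⟩
    · rw [hgx]; exact N0.symm a c hac
    · rw [hgx]; exact hrac
  have hmaps : Set.MapsTo g S S := fun x hx => (step x hx).1
  have hinj : Set.InjOn g S := by
    intro x hx x' hx' hEq
    obtain ⟨_, a, _, hga, _, hax⟩ := step x hx
    obtain ⟨_, a', _, hga', _, hax'⟩ := step x' hx'
    rw [hEq, hga'] at hga
    have haa : a' = a := Option.some.inj hga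
    subst haa
    rw [hax] at hax'
    exact Option.some.inj hax'
  have hbij : Set.BijOn g S S :=
    ((Set.toFinite S).injOn_iff_bijOn_of_mapsTo hmaps).mp hinj
  -- find the base point x0 ∈ S
  have hfinal : ∀ x0 ∈ S, x0 = u ∨ (x0 = v ∧ N.M u = none) → False := by
    rintro x0 hx0 hcase
    obtain ⟨x, hxS, hgx⟩ := hbij.2.2 hx0
    obtain ⟨_, a, hNxa, hga, hrlt, hax⟩ := step x hxS
    rw [hgx] at hga hrlt
    rcases hcase with hcase | ⟨hcase, hunone⟩
    · -- x0 = u : then a = v, and rank v u < rank v x ≤ 3 = rank v u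
      rw [hcase, hm0] at hga
      have hav : v = a := Option.some.inj hga
      rw [hcase, ← hav] at hrlt
      have := hbound v x (I.G.adj_symm (N.adj x v (hav ▸ hNxa)))
      omega
    · -- x0 = v : then a = u, but u is matched in N
      rw [hcase, N0.symm u v hm0] at hga
      have hau : u = a := Option.some.inj hga
      rw [← hau, hunone] at hax
      exact Option.some_ne_none x hax.symm
  rcases hu0 : N.M u with _ | w
  · -- u unmatched in N : v ∈ S
    have hD : ¬ (N.M v = none ∨ ∃ w, N.M v = some w ∧ I.rank v u < I.rank v w) := by
      intro hD
      exact hN u v ⟨hadj, by rw [hu0]; exact fun h => Option.some_ne_none v h.symm, Or.inl hu0, hD⟩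
    push_neg at hD
    obtain ⟨hDn, hDw⟩ := hD
    obtain ⟨w1, hvw1⟩ : ∃ w1, N.M v = some w1 := Option.ne_none_iff_exists'.mp hDn
    have hw1u : w1 ≠ u := by
      intro hEq; subst hEq
      rw [N.symm v w1 hvw1] at hu0
      exact Option.some_ne_none v hu0
    have hrv : I.rank v w1 < I.rank v u := by
      have hle := hDw w1 hvw1
      have hneq : I.rank v w1 ≠ I.rank v u :=
        fun hEq => hw1u (I.rank_inj v w1 u (N.adj v w1 hvw1) hadj.symm hEq)
      omega
    exact hfinal v ⟨w1, u, hvw1, N0.symm u v hm0, hrv⟩ (Or.inr ⟨rfl, hu0⟩)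
  · -- u matched to w ≠ v : u ∈ S
    have hwv : w ≠ v := by
      intro hEq; subst hEq; exact hne hu0
    have hru : I.rank u w < I.rank u v := by
      have hle := hbound u w (N.adj u w hu0)
      have hneq : I.rank u w ≠ I.rank u v :=
        fun hEq => hwv (I.rank_inj u w v (N.adj u w hu0) hadj hEq)
      omega
    exact hfinal u ⟨w, v, hu0, hm0, hru⟩ (Or.inl rfl)
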